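/- Let N₁ and N₂ be disjoint finite index sets and v_i ∈ ℝ^d (i ∈ N₁ ∪ N₂) fixed vectors. Let Φ be a random vector in ℝ^d satisfying the perturbation assumption with constants b₁, b₂ > 0, and let h_i (i ∈ N₁ ∪ N₂), n₁, n₂, n₃ be mutually independent zero-mean real random variables with finite second moments and E[h_i²] > 0, independent of Φ. Set a_i = 1/E[h_i²]. Then E[Φ ( (∑_{i∈N₁} a_i h_i + n₁)(∑_{i∈N₁} ⟨v_i, Φ⟩ h_i + ∑_{j∈N₂} a_j h_j + n₂) + (∑_{j∈N₂} ⟨v_j, Φ⟩ h_j + n₃)(∑_{i∈N₁} ⟨v_i, Φ⟩ h_i + ∑_{j∈N₂} a_j h_j + n₂) )] = b₁ ∑_{i∈N₁∪N₂} v_i. -/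

import Mathlib

open MeasureTheory ProbabilityTheory

lemma integrable_mul_of_memL2 {Ω : Type*} [MeasurableSpace Ω] {μ : Measure Ω}
    {f g : Ω → ℝ} (hf : MemLp f 2 μ) (hg : MemLp g 2 μ) :
    Integrable (fun ω => f ω * g ω) μ := by
  have h : MemLp (f • g) 1 μ := hg.smul hf
  have h2 := memLp_one_iff_integrable.mp h
  simpa [Pi.smul_apply', smul_eq_mul, Pi.mul_def] using h2

lemma euclid_abs_apply_le_norm {d : ℕ} (x : EuclideanSpace ℝ (Fin d)) (j : Fin d) :
    |x j| ≤ ‖x‖ := by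
  have h1 : x j = (inner ℝ (EuclideanSpace.single j (1:ℝ)) x : ℝ) := by
    simp [EuclideanSpace.inner_single_left]
  rw [h1]
  calc |(inner ℝ (EuclideanSpace.single j (1:ℝ)) x : ℝ)|
      ≤ ‖EuclideanSpace.single j (1:ℝ)‖ * ‖x‖ := abs_real_inner_le_norm _ _
    _ = ‖x‖ := by simp [EuclideanSpace.norm_single]


/-- Unbiasedness of the asynchronous EFOFL gradient estimate: with a perturbation vector
`Φ` (constants `b₁, b₂`), zero-mean mutually independent channels `h_i` (`i ∈ N₁ ∪ N₂`,
`N₁, N₂` disjoint) and noises `n₁, n₂, n₃`, all independent of `Φ`, and pilots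
`a_i = 1/E[h_i²]`, the three-slot estimator satisfies
`E[Φ ((∑_{N₁} aᵢhᵢ + n₁)(∑_{N₁} ⟨vᵢ,Φ⟩hᵢ + ∑_{N₂} aⱼhⱼ + n₂)
  + (∑_{N₂} ⟨vⱼ,Φ⟩hⱼ + n₃)(∑_{N₁} ⟨vᵢ,Φ⟩hᵢ + ∑_{N₂} aⱼhⱼ + n₂))] = b₁ ∑_{N₁∪N₂} vᵢ`. -/
theorem efofl_async_unbiased
    {d : ℕ} {Ω : Type*} [MeasurableSpace Ω] (μ : Measure Ω) [IsProbabilityMeasure μ]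
    {ι : Type*} [DecidableEq ι] (N₁ N₂ : Finset ι) (hdisj : Disjoint N₁ N₂)
    (v : ι → EuclideanSpace ℝ (Fin d))
    (b₁ b₂ : ℝ) (hb₁ : 0 < b₁) (hb₂ : 0 < b₂)
    (Φ : Ω → EuclideanSpace ℝ (Fin d)) (hΦmeas : Measurable Φ)
    (hΦcov : ∀ j l : Fin d, j ≠ l → ∫ ω, Φ ω j * Φ ω l ∂μ = 0)
    (hΦvar : ∀ j : Fin d, ∫ ω, (Φ ω j) ^ 2 ∂μ = b₁)
    (hΦbdd : ∀ᵐ ω ∂μ, ‖Φ ω‖ ≤ b₂)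
    (h : ι → Ω → ℝ) (n1 n2 n3 : Ω → ℝ)
    (hmeas : ∀ i ∈ N₁ ∪ N₂, Measurable (h i))
    (hn1 : Measurable n1) (hn2 : Measurable n2) (hn3 : Measurable n3)
    (hL2 : ∀ i ∈ N₁ ∪ N₂, MemLp (h i) 2 μ)
    (hn1L2 : MemLp n1 2 μ) (hn2L2 : MemLp n2 2 μ) (hn3L2 : MemLp n3 2 μ)
    (hmean : ∀ i ∈ N₁ ∪ N₂, ∫ ω, h i ω ∂μ = 0)
    (hn1mean : ∫ ω, n1 ω ∂μ = 0) (hn2mean : ∫ ω, n2 ω ∂μ = 0)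
    (hn3mean : ∫ ω, n3 ω ∂μ = 0)
    (hpos : ∀ i ∈ N₁ ∪ N₂, 0 < ∫ ω, (h i ω) ^ 2 ∂μ)
    (hIndep : iIndepFun
      (Sum.elim (fun i : {j // j ∈ N₁ ∪ N₂} => h i.1) ![n1, n2, n3]) μ)
    (hIndepΦ : IndepFun
      (fun ω => ((fun i : {j // j ∈ N₁ ∪ N₂} => h i.1 ω), n1 ω, n2 ω, n3 ω)) Φ μ)
    (a : ι → ℝ) (ha : ∀ i ∈ N₁ ∪ N₂, a i = (∫ ω, (h i ω) ^ 2 ∂μ)⁻¹) :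
    (∫ ω, ((∑ i ∈ N₁, a i * h i ω + n1 ω) *
          (∑ i ∈ N₁, (inner ℝ (v i) (Φ ω) : ℝ) * h i ω +
            ∑ j ∈ N₂, a j * h j ω + n2 ω) +
        (∑ j ∈ N₂, (inner ℝ (v j) (Φ ω) : ℝ) * h j ω + n3 ω) *
          (∑ i ∈ N₁, (inner ℝ (v i) (Φ ω) : ℝ) * h i ω +
            ∑ j ∈ N₂, a j * h j ω + n2 ω)) • Φ ω ∂μ) =
      b₁ • ∑ i ∈ N₁ ∪ N₂, v i := by
  classical
  -- notation
  set L : ι → EuclideanSpace ℝ (Fin d) → ℝ :=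
    fun i x => if i ∈ N₁ then a i else (inner ℝ (v i) x : ℝ) with hLdef
  set R : ι → EuclideanSpace ℝ (Fin d) → ℝ :=
    fun i x => if i ∈ N₁ then (inner ℝ (v i) x : ℝ) else a i with hRdef
  set A : Ω → ℝ := fun ω => ∑ i ∈ N₁ ∪ N₂, L i (Φ ω) * h i ω with hAdef
  set B : Ω → ℝ := fun ω => ∑ i ∈ N₁ ∪ N₂, R i (Φ ω) * h i ω with hBdef
  have hnot : ∀ i ∈ N₂, i ∉ N₁ := fun i hi => Finset.disjoint_right.mp hdisj hi
  -- measurability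
  have hΦj : ∀ j : Fin d, Measurable fun ω => Φ ω j := fun j =>
    (EuclideanSpace.proj j).continuous.measurable.comp hΦmeas
  have hinner : ∀ i, Measurable fun x : EuclideanSpace ℝ (Fin d) => (inner ℝ (v i) x : ℝ) :=
    fun i => (innerSL ℝ (v i)).continuous.measurable
  have hLmeas : ∀ i, Measurable (L i) := by
    intro i
    by_cases hi : i ∈ N₁ <;> simp only [hLdef, hi, if_true, if_false]
    · exact measurable_const
    · exact hinner i
  have hRmeas : ∀ i, Measurable (R i) := by
    intro i
    by_cases hi : i ∈ N₁ <;> simp only [hRdef, hi, if_true, if_false]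
    · exact hinner i
    · exact measurable_const
  -- bounds
  have hLbd : ∀ i (x : EuclideanSpace ℝ (Fin d)), ‖x‖ ≤ b₂ →
      |L i x| ≤ |a i| + ‖v i‖ * b₂ := by
    intro i x hx
    by_cases hi : i ∈ N₁ <;> simp only [hLdef, hi, if_true, if_false]
    · exact le_add_of_nonneg_right (by positivity)
    · refine le_add_of_nonneg_of_le (abs_nonneg _) ?_
      exact (abs_real_inner_le_norm _ _).trans
        (mul_le_mul_of_nonneg_left hx (norm_nonneg _))
  have hRbd : ∀ i (x : EuclideanSpace ℝ (Fin d)), ‖x‖ ≤ b₂ →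
      |R i x| ≤ |a i| + ‖v i‖ * b₂ := by
    intro i x hx
    by_cases hi : i ∈ N₁ <;> simp only [hRdef, hi, if_true, if_false]
    · refine le_add_of_nonneg_of_le (abs_nonneg _) ?_
      exact (abs_real_inner_le_norm _ _).trans
        (mul_le_mul_of_nonneg_left hx (norm_nonneg _))
    · exact le_add_of_nonneg_right (by positivity)
  -- the tuple of channel/noise variables
  set tup : Ω → ({j // j ∈ N₁ ∪ N₂} → ℝ) × ℝ × ℝ × ℝ :=
    fun ω => ((fun i => h i.1 ω), n1 ω, n2 ω, n3 ω) with htupdef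
  have htupmeas : Measurable tup :=
    (measurable_pi_lambda _ fun (i : {j // j ∈ N₁ ∪ N₂}) => hmeas i.1 i.2).prodMk
      (hn1.prodMk (hn2.prodMk hn3))
  -- factorization lemma
  have fact : ∀ (F : EuclideanSpace ℝ (Fin d) → ℝ)
      (g : (({j // j ∈ N₁ ∪ N₂} → ℝ) × ℝ × ℝ × ℝ) → ℝ), Measurable F → Measurable g →
      ∫ ω, F (Φ ω) * g (tup ω) ∂μ
        = (∫ ω, F (Φ ω) ∂μ) * ∫ ω, g (tup ω) ∂μ := by
    intro F g hF hg
    have hind : IndepFun (fun ω => F (Φ ω)) (fun ω => g (tup ω)) μ :=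
      (hIndepΦ.comp hg hF).symm
    exact hind.integral_fun_mul_eq_mul_integral ((hF.comp hΦmeas).aestronglyMeasurable)
      ((hg.comp htupmeas).aestronglyMeasurable)
  -- pairwise independence facts on the H-side
  have e_hh : ∀ i k : {j // j ∈ N₁ ∪ N₂}, i ≠ k →
      ∫ ω, h i.1 ω * h k.1 ω ∂μ = 0 := by
    intro i k hik
    have hne : (Sum.inl i : {j // j ∈ N₁ ∪ N₂} ⊕ Fin 3) ≠ Sum.inl k := by
      simp [hik]
    have hind : IndepFun (h i.1) (h k.1) μ := hIndep.indepFun hne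
    rw [hind.integral_fun_mul_eq_mul_integral (hmeas i.1 i.2).aestronglyMeasurable
      (hmeas k.1 k.2).aestronglyMeasurable, hmean i.1 i.2, zero_mul]
  have e_hn2 : ∀ i : {j // j ∈ N₁ ∪ N₂}, ∫ ω, h i.1 ω * n2 ω ∂μ = 0 := by
    intro i
    have hne : (Sum.inl i : {j // j ∈ N₁ ∪ N₂} ⊕ Fin 3) ≠ Sum.inr 1 := by simp
    have hind : IndepFun (h i.1) n2 μ := hIndep.indepFun hne
    rw [hind.integral_fun_mul_eq_mul_integral (hmeas i.1 i.2).aestronglyMeasurable hn2.aestronglyMeasurable,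
      hmean i.1 i.2, zero_mul]
  have e_n1h : ∀ k : {j // j ∈ N₁ ∪ N₂}, ∫ ω, n1 ω * h k.1 ω ∂μ = 0 := by
    intro k
    have hne : (Sum.inr 0 : {j // j ∈ N₁ ∪ N₂} ⊕ Fin 3) ≠ Sum.inl k := by simp
    have hind : IndepFun n1 (h k.1) μ := hIndep.indepFun hne
    rw [hind.integral_fun_mul_eq_mul_integral hn1.aestronglyMeasurable (hmeas k.1 k.2).aestronglyMeasurable,
      hn1mean, zero_mul]
  have e_n3h : ∀ k : {j // j ∈ N₁ ∪ N₂}, ∫ ω, n3 ω * h k.1 ω ∂μ = 0 := by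
    intro k
    have hne : (Sum.inr 2 : {j // j ∈ N₁ ∪ N₂} ⊕ Fin 3) ≠ Sum.inl k := by simp
    have hind : IndepFun n3 (h k.1) μ := hIndep.indepFun hne
    rw [hind.integral_fun_mul_eq_mul_integral hn3.aestronglyMeasurable (hmeas k.1 k.2).aestronglyMeasurable,
      hn3mean, zero_mul]
  have e_n1n2 : ∫ ω, n1 ω * n2 ω ∂μ = 0 := by
    have hne : (Sum.inr 0 : {j // j ∈ N₁ ∪ N₂} ⊕ Fin 3) ≠ Sum.inr 1 := by simp
    have hind : IndepFun n1 n2 μ := hIndep.indepFun hne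
    rw [hind.integral_fun_mul_eq_mul_integral hn1.aestronglyMeasurable hn2.aestronglyMeasurable,
      hn1mean, zero_mul]
  have e_n3n2 : ∫ ω, n3 ω * n2 ω ∂μ = 0 := by
    have hne : (Sum.inr 2 : {j // j ∈ N₁ ∪ N₂} ⊕ Fin 3) ≠ Sum.inr 1 := by simp
    have hind : IndepFun n3 n2 μ := hIndep.indepFun hne
    rw [hind.integral_fun_mul_eq_mul_integral hn3.aestronglyMeasurable hn2.aestronglyMeasurable,
      hn3mean, zero_mul]
  
  -- Φ-side facts
  have hinner_sum : ∀ i (x : EuclideanSpace ℝ (Fin d)), (inner ℝ (v i) x : ℝ) = ∑ l, v i l * x l := by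
    intro i x
    rw [PiLp.inner_apply]
    simp [RCLike.inner_apply, starRingEnd_apply, mul_comm]
  have intΦ2 : ∀ l j : Fin d, Integrable (fun ω => Φ ω l * Φ ω j) μ := by
    intro l j
    refine Integrable.mono' (integrable_const (b₂ * b₂))
      ((hΦj l).mul (hΦj j)).aestronglyMeasurable ?_
    filter_upwards [hΦbdd] with ω hω
    rw [Real.norm_eq_abs, abs_mul]
    exact mul_le_mul ((euclid_abs_apply_le_norm _ _).trans hω)
      ((euclid_abs_apply_le_norm _ _).trans hω) (abs_nonneg _) hb₂.le
  have eΦ : ∀ i (j : Fin d), ∫ ω, (inner ℝ (v i) (Φ ω) : ℝ) * Φ ω j ∂μ = v i j * b₁ := by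
    intro i j
    have hpt : ∀ ω, (inner ℝ (v i) (Φ ω) : ℝ) * Φ ω j = ∑ l, v i l * (Φ ω l * Φ ω j) := by
      intro ω
      rw [hinner_sum, Finset.sum_mul]
      exact Finset.sum_congr rfl fun l _ => by ring
    rw [integral_congr_ae (Filter.Eventually.of_forall hpt),
      integral_finset_sum _ fun l _ => (intΦ2 l j).const_mul (v i l)]
    have hterm : ∀ l ∈ Finset.univ, (∫ ω, v i l * (Φ ω l * Φ ω j) ∂μ)
        = if l = j then v i j * b₁ else 0 := by
      intro l _
      rw [integral_const_mul]
      by_cases hlj : l = j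
      · subst hlj
        rw [if_pos rfl]
        have hsq : ∀ ω, Φ ω l * Φ ω l = (Φ ω l) ^ 2 := fun ω => (sq _).symm
        rw [integral_congr_ae (Filter.Eventually.of_forall hsq), hΦvar]
      · rw [if_neg hlj, hΦcov l j hlj, mul_zero]
    rw [Finset.sum_congr rfl hterm, Finset.sum_ite_eq' Finset.univ j]
    simp
  -- bounded × integrable
  have bddmul : ∀ (f g : Ω → ℝ) (C : ℝ), AEStronglyMeasurable f μ →
      (∀ᵐ ω ∂μ, |f ω| ≤ C) → Integrable g μ →
      Integrable (fun ω => f ω * g ω) μ := by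
    intro f g C hf hbd hg
    exact hg.bdd_mul hf (by simpa [Real.norm_eq_abs] using hbd)
  
  -- generic integrability of the six term shapes
  have int_t1 : ∀ (ψ : EuclideanSpace ℝ (Fin d) → ℝ) (Cψ : ℝ), Measurable ψ →
      (∀ᵐ ω ∂μ, |ψ (Φ ω)| ≤ Cψ) → ∀ i ∈ N₁ ∪ N₂, ∀ k ∈ N₁ ∪ N₂,
      Integrable (fun ω => (L i (Φ ω) * R k (Φ ω) * ψ (Φ ω)) * (h i ω * h k ω)) μ := by
    intro ψ Cψ hψm hψbd i hi k hk
    refine bddmul _ _ ((|a i| + ‖v i‖ * b₂) * (|a k| + ‖v k‖ * b₂) * Cψ)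
      ((((hLmeas i).comp hΦmeas).mul ((hRmeas k).comp hΦmeas)).mul
        (hψm.comp hΦmeas)).aestronglyMeasurable ?_
      (integrable_mul_of_memL2 (hL2 i hi) (hL2 k hk))
    filter_upwards [hΦbdd, hψbd] with ω hω hψω
    rw [abs_mul, abs_mul]
    exact mul_le_mul (mul_le_mul (hLbd i _ hω) (hRbd k _ hω) (abs_nonneg _) (by positivity))
      hψω (abs_nonneg _) (by positivity)
  have int_t2 : ∀ (ψ : EuclideanSpace ℝ (Fin d) → ℝ) (Cψ : ℝ), Measurable ψ →
      (∀ᵐ ω ∂μ, |ψ (Φ ω)| ≤ Cψ) → ∀ i ∈ N₁ ∪ N₂,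
      Integrable (fun ω => (L i (Φ ω) * ψ (Φ ω)) * (h i ω * n2 ω)) μ := by
    intro ψ Cψ hψm hψbd i hi
    refine bddmul _ _ ((|a i| + ‖v i‖ * b₂) * Cψ)
      (((hLmeas i).comp hΦmeas).mul (hψm.comp hΦmeas)).aestronglyMeasurable ?_
      (integrable_mul_of_memL2 (hL2 i hi) hn2L2)
    filter_upwards [hΦbdd, hψbd] with ω hω hψω
    rw [abs_mul]
    exact mul_le_mul (hLbd i _ hω) hψω (abs_nonneg _) (by positivity)
  have int_t3 : ∀ (ψ : EuclideanSpace ℝ (Fin d) → ℝ) (Cψ : ℝ), Measurable ψ →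
      (∀ᵐ ω ∂μ, |ψ (Φ ω)| ≤ Cψ) → ∀ k ∈ N₁ ∪ N₂,
      Integrable (fun ω => (R k (Φ ω) * ψ (Φ ω)) * (n1 ω * h k ω)) μ := by
    intro ψ Cψ hψm hψbd k hk
    refine bddmul _ _ ((|a k| + ‖v k‖ * b₂) * Cψ)
      (((hRmeas k).comp hΦmeas).mul (hψm.comp hΦmeas)).aestronglyMeasurable ?_
      (integrable_mul_of_memL2 hn1L2 (hL2 k hk))
    filter_upwards [hΦbdd, hψbd] with ω hω hψω
    rw [abs_mul]
    exact mul_le_mul (hRbd k _ hω) hψω (abs_nonneg _) (by positivity)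
  have int_t5 : ∀ (ψ : EuclideanSpace ℝ (Fin d) → ℝ) (Cψ : ℝ), Measurable ψ →
      (∀ᵐ ω ∂μ, |ψ (Φ ω)| ≤ Cψ) → ∀ k ∈ N₁ ∪ N₂,
      Integrable (fun ω => (R k (Φ ω) * ψ (Φ ω)) * (n3 ω * h k ω)) μ := by
    intro ψ Cψ hψm hψbd k hk
    refine bddmul _ _ ((|a k| + ‖v k‖ * b₂) * Cψ)
      (((hRmeas k).comp hΦmeas).mul (hψm.comp hΦmeas)).aestronglyMeasurable ?_
      (integrable_mul_of_memL2 hn3L2 (hL2 k hk))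
    filter_upwards [hΦbdd, hψbd] with ω hω hψω
    rw [abs_mul]
    exact mul_le_mul (hRbd k _ hω) hψω (abs_nonneg _) (by positivity)
  have int_t4 : ∀ (ψ : EuclideanSpace ℝ (Fin d) → ℝ) (Cψ : ℝ), Measurable ψ →
      (∀ᵐ ω ∂μ, |ψ (Φ ω)| ≤ Cψ) →
      Integrable (fun ω => ψ (Φ ω) * (n1 ω * n2 ω)) μ := by
    intro ψ Cψ hψm hψbd
    exact bddmul _ _ Cψ (hψm.comp hΦmeas).aestronglyMeasurable hψbd
      (integrable_mul_of_memL2 hn1L2 hn2L2)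
  have int_t6 : ∀ (ψ : EuclideanSpace ℝ (Fin d) → ℝ) (Cψ : ℝ), Measurable ψ →
      (∀ᵐ ω ∂μ, |ψ (Φ ω)| ≤ Cψ) →
      Integrable (fun ω => ψ (Φ ω) * (n3 ω * n2 ω)) μ := by
    intro ψ Cψ hψm hψbd
    exact bddmul _ _ Cψ (hψm.comp hΦmeas).aestronglyMeasurable hψbd
      (integrable_mul_of_memL2 hn3L2 hn2L2)
  -- pointwise expansion
  have expand : ∀ (ψ : EuclideanSpace ℝ (Fin d) → ℝ) (ω : Ω),
      ((A ω + (n1 ω + n3 ω)) * (B ω + n2 ω)) * ψ (Φ ω)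
      = (∑ i ∈ N₁ ∪ N₂, ∑ k ∈ N₁ ∪ N₂, (L i (Φ ω) * R k (Φ ω) * ψ (Φ ω)) * (h i ω * h k ω))
        + ((∑ i ∈ N₁ ∪ N₂, (L i (Φ ω) * ψ (Φ ω)) * (h i ω * n2 ω))
        + ((∑ k ∈ N₁ ∪ N₂, (R k (Φ ω) * ψ (Φ ω)) * (n1 ω * h k ω))
        + ((∑ k ∈ N₁ ∪ N₂, (R k (Φ ω) * ψ (Φ ω)) * (n3 ω * h k ω))
        + (ψ (Φ ω) * (n1 ω * n2 ω) + ψ (Φ ω) * (n3 ω * n2 ω))))) := by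
    intro ψ ω
    have h1 : A ω * B ω * ψ (Φ ω)
        = ∑ i ∈ N₁ ∪ N₂, ∑ k ∈ N₁ ∪ N₂,
            (L i (Φ ω) * R k (Φ ω) * ψ (Φ ω)) * (h i ω * h k ω) := by
      simp only [hAdef, hBdef]
      rw [Finset.sum_mul_sum, Finset.sum_mul]
      refine Finset.sum_congr rfl fun i _ => ?_
      rw [Finset.sum_mul]
      exact Finset.sum_congr rfl fun k _ => by ring
    have h2 : A ω * n2 ω * ψ (Φ ω)
        = ∑ i ∈ N₁ ∪ N₂, (L i (Φ ω) * ψ (Φ ω)) * (h i ω * n2 ω) := by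
      simp only [hAdef]
      rw [Finset.sum_mul, Finset.sum_mul]
      exact Finset.sum_congr rfl fun i _ => by ring
    have h3 : n1 ω * B ω * ψ (Φ ω)
        = ∑ k ∈ N₁ ∪ N₂, (R k (Φ ω) * ψ (Φ ω)) * (n1 ω * h k ω) := by
      simp only [hBdef]
      rw [Finset.mul_sum, Finset.sum_mul]
      exact Finset.sum_congr rfl fun k _ => by ring
    have h5 : n3 ω * B ω * ψ (Φ ω)
        = ∑ k ∈ N₁ ∪ N₂, (R k (Φ ω) * ψ (Φ ω)) * (n3 ω * h k ω) := by
      simp only [hBdef]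
      rw [Finset.mul_sum, Finset.sum_mul]
      exact Finset.sum_congr rfl fun k _ => by ring
    calc ((A ω + (n1 ω + n3 ω)) * (B ω + n2 ω)) * ψ (Φ ω)
        = A ω * B ω * ψ (Φ ω) + (A ω * n2 ω * ψ (Φ ω)
          + (n1 ω * B ω * ψ (Φ ω) + (n3 ω * B ω * ψ (Φ ω)
          + (ψ (Φ ω) * (n1 ω * n2 ω) + ψ (Φ ω) * (n3 ω * n2 ω))))) := by ring
      _ = _ := by rw [h1, h2, h3, h5]
  
  -- evaluations via independence factorization
  have eval1 : ∀ (ψ : EuclideanSpace ℝ (Fin d) → ℝ), Measurable ψ →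
      ∀ i (hi : i ∈ N₁ ∪ N₂), ∀ k (hk : k ∈ N₁ ∪ N₂),
      ∫ ω, (L i (Φ ω) * R k (Φ ω) * ψ (Φ ω)) * (h i ω * h k ω) ∂μ
        = (∫ ω, L i (Φ ω) * R k (Φ ω) * ψ (Φ ω) ∂μ) * ∫ ω, h i ω * h k ω ∂μ := by
    intro ψ hψm i hi k hk
    exact fact (fun x => L i x * R k x * ψ x)
      (fun p => p.1 ⟨i, hi⟩ * p.1 ⟨k, hk⟩)
      (((hLmeas i).mul (hRmeas k)).mul hψm)
      (((measurable_pi_apply _).comp measurable_fst).mul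
        ((measurable_pi_apply _).comp measurable_fst))
  have eval2 : ∀ (ψ : EuclideanSpace ℝ (Fin d) → ℝ), Measurable ψ →
      ∀ i (hi : i ∈ N₁ ∪ N₂),
      ∫ ω, (L i (Φ ω) * ψ (Φ ω)) * (h i ω * n2 ω) ∂μ
        = (∫ ω, L i (Φ ω) * ψ (Φ ω) ∂μ) * ∫ ω, h i ω * n2 ω ∂μ := by
    intro ψ hψm i hi
    exact fact (fun x => L i x * ψ x)
      (fun p => p.1 ⟨i, hi⟩ * p.2.2.1)
      ((hLmeas i).mul hψm)
      (((measurable_pi_apply _).comp measurable_fst).mul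
        (measurable_fst.comp (measurable_snd.comp measurable_snd)))
  have eval3 : ∀ (ψ : EuclideanSpace ℝ (Fin d) → ℝ), Measurable ψ →
      ∀ k (hk : k ∈ N₁ ∪ N₂),
      ∫ ω, (R k (Φ ω) * ψ (Φ ω)) * (n1 ω * h k ω) ∂μ
        = (∫ ω, R k (Φ ω) * ψ (Φ ω) ∂μ) * ∫ ω, n1 ω * h k ω ∂μ := by
    intro ψ hψm k hk
    exact fact (fun x => R k x * ψ x)
      (fun p => p.2.1 * p.1 ⟨k, hk⟩)
      ((hRmeas k).mul hψm)
      ((measurable_fst.comp measurable_snd).mul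
        ((measurable_pi_apply _).comp measurable_fst))
  have eval5 : ∀ (ψ : EuclideanSpace ℝ (Fin d) → ℝ), Measurable ψ →
      ∀ k (hk : k ∈ N₁ ∪ N₂),
      ∫ ω, (R k (Φ ω) * ψ (Φ ω)) * (n3 ω * h k ω) ∂μ
        = (∫ ω, R k (Φ ω) * ψ (Φ ω) ∂μ) * ∫ ω, n3 ω * h k ω ∂μ := by
    intro ψ hψm k hk
    exact fact (fun x => R k x * ψ x)
      (fun p => p.2.2.2 * p.1 ⟨k, hk⟩)
      ((hRmeas k).mul hψm)
      ((measurable_snd.comp (measurable_snd.comp measurable_snd)).mul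
        ((measurable_pi_apply _).comp measurable_fst))
  have eval4 : ∀ (ψ : EuclideanSpace ℝ (Fin d) → ℝ), Measurable ψ →
      ∫ ω, ψ (Φ ω) * (n1 ω * n2 ω) ∂μ
        = (∫ ω, ψ (Φ ω) ∂μ) * ∫ ω, n1 ω * n2 ω ∂μ := by
    intro ψ hψm
    exact fact ψ (fun p => p.2.1 * p.2.2.1) hψm
      ((measurable_fst.comp measurable_snd).mul
        (measurable_fst.comp (measurable_snd.comp measurable_snd)))
  have eval6 : ∀ (ψ : EuclideanSpace ℝ (Fin d) → ℝ), Measurable ψ →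
      ∫ ω, ψ (Φ ω) * (n3 ω * n2 ω) ∂μ
        = (∫ ω, ψ (Φ ω) ∂μ) * ∫ ω, n3 ω * n2 ω ∂μ := by
    intro ψ hψm
    exact fact ψ (fun p => p.2.2.2 * p.2.2.1) hψm
      ((measurable_snd.comp (measurable_snd.comp measurable_snd)).mul
        (measurable_fst.comp (measurable_snd.comp measurable_snd)))
  
  -- the key component-wise computation
  have key : ∀ j : Fin d,
      ∫ ω, ((A ω + (n1 ω + n3 ω)) * (B ω + n2 ω)) * Φ ω j ∂μ
        = b₁ * ∑ i ∈ N₁ ∪ N₂, v i j := by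
    intro j
    have hψm : Measurable (fun x : EuclideanSpace ℝ (Fin d) => x j) :=
      (EuclideanSpace.proj j).continuous.measurable
    have hψbd : ∀ᵐ ω ∂μ, |(fun x : EuclideanSpace ℝ (Fin d) => x j) (Φ ω)| ≤ b₂ := by
      filter_upwards [hΦbdd] with ω hω
      exact (euclid_abs_apply_le_norm _ _).trans hω
    have I1 : Integrable (fun ω => ∑ i ∈ N₁ ∪ N₂, ∑ k ∈ N₁ ∪ N₂,
        (L i (Φ ω) * R k (Φ ω) * Φ ω j) * (h i ω * h k ω)) μ :=
      integrable_finset_sum _ fun i hi => integrable_finset_sum _ fun k hk =>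
        int_t1 _ b₂ hψm hψbd i hi k hk
    have I2 : Integrable (fun ω => ∑ i ∈ N₁ ∪ N₂,
        (L i (Φ ω) * Φ ω j) * (h i ω * n2 ω)) μ :=
      integrable_finset_sum _ fun i hi => int_t2 _ b₂ hψm hψbd i hi
    have I3 : Integrable (fun ω => ∑ k ∈ N₁ ∪ N₂,
        (R k (Φ ω) * Φ ω j) * (n1 ω * h k ω)) μ :=
      integrable_finset_sum _ fun k hk => int_t3 _ b₂ hψm hψbd k hk
    have I5 : Integrable (fun ω => ∑ k ∈ N₁ ∪ N₂,
        (R k (Φ ω) * Φ ω j) * (n3 ω * h k ω)) μ :=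
      integrable_finset_sum _ fun k hk => int_t5 _ b₂ hψm hψbd k hk
    have I4 : Integrable (fun ω => Φ ω j * (n1 ω * n2 ω)) μ := int_t4 _ b₂ hψm hψbd
    have I6 : Integrable (fun ω => Φ ω j * (n3 ω * n2 ω)) μ := int_t6 _ b₂ hψm hψbd
    have I46 : Integrable (fun ω => Φ ω j * (n1 ω * n2 ω) + Φ ω j * (n3 ω * n2 ω)) μ :=
      I4.add I6
    have I546 : Integrable (fun ω => ∑ k ∈ N₁ ∪ N₂, R k (Φ ω) * Φ ω j * (n3 ω * h k ω)
        + (Φ ω j * (n1 ω * n2 ω) + Φ ω j * (n3 ω * n2 ω))) μ := I5.add I46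
    have I3546 : Integrable (fun ω => ∑ k ∈ N₁ ∪ N₂, R k (Φ ω) * Φ ω j * (n1 ω * h k ω)
        + (∑ k ∈ N₁ ∪ N₂, R k (Φ ω) * Φ ω j * (n3 ω * h k ω)
        + (Φ ω j * (n1 ω * n2 ω) + Φ ω j * (n3 ω * n2 ω)))) μ := I3.add I546
    have I23546 : Integrable (fun ω => ∑ i ∈ N₁ ∪ N₂, L i (Φ ω) * Φ ω j * (h i ω * n2 ω)
        + (∑ k ∈ N₁ ∪ N₂, R k (Φ ω) * Φ ω j * (n1 ω * h k ω)
        + (∑ k ∈ N₁ ∪ N₂, R k (Φ ω) * Φ ω j * (n3 ω * h k ω)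
        + (Φ ω j * (n1 ω * n2 ω) + Φ ω j * (n3 ω * n2 ω))))) μ := I2.add I3546
    rw [integral_congr_ae (Filter.Eventually.of_forall (expand (fun x => x j)))]
    rw [integral_add I1 I23546,
      integral_add I2 I3546,
      integral_add I3 I546,
      integral_add I5 I46,
      integral_add I4 I6]
    rw [integral_finset_sum _ fun i hi => integrable_finset_sum _ fun k hk =>
        int_t1 _ b₂ hψm hψbd i hi k hk,
      integral_finset_sum _ fun i hi => int_t2 _ b₂ hψm hψbd i hi,
      integral_finset_sum _ fun k hk => int_t3 _ b₂ hψm hψbd k hk,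
      integral_finset_sum _ fun k hk => int_t5 _ b₂ hψm hψbd k hk]
    have S1 : ∑ i ∈ N₁ ∪ N₂, ∫ ω, (∑ k ∈ N₁ ∪ N₂,
          (L i (Φ ω) * R k (Φ ω) * Φ ω j) * (h i ω * h k ω)) ∂μ
        = ∑ i ∈ N₁ ∪ N₂, v i j * b₁ := by
      refine Finset.sum_congr rfl fun i hi => ?_
      rw [integral_finset_sum _ fun k hk => int_t1 _ b₂ hψm hψbd i hi k hk]
      have hz : ∀ k ∈ N₁ ∪ N₂, k ≠ i →
          ∫ ω, (L i (Φ ω) * R k (Φ ω) * Φ ω j) * (h i ω * h k ω) ∂μ = 0 := by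
        intro k hk hki
        rw [eval1 _ hψm i hi k hk,
          e_hh ⟨i, hi⟩ ⟨k, hk⟩ (by simp [Subtype.ext_iff]; exact Ne.symm hki), mul_zero]
      rw [Finset.sum_eq_single_of_mem i hi hz, eval1 _ hψm i hi i hi]
      have hFe : ∀ ω, L i (Φ ω) * R i (Φ ω) * Φ ω j
          = a i * ((inner ℝ (v i) (Φ ω) : ℝ) * Φ ω j) := by
        intro ω
        by_cases h1 : i ∈ N₁
        · simp only [hLdef, hRdef, if_pos h1]; ring
        · simp only [hLdef, hRdef, if_neg h1]; ring
      rw [integral_congr_ae (Filter.Eventually.of_forall hFe), integral_const_mul, eΦ i j]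
      have hsq : ∫ ω, h i ω * h i ω ∂μ = ∫ ω, (h i ω) ^ 2 ∂μ :=
        integral_congr_ae (Filter.Eventually.of_forall fun ω => (sq _).symm)
      rw [hsq, ha i hi]
      have hne : (∫ ω, (h i ω) ^ 2 ∂μ) ≠ 0 := (hpos i hi).ne'
      field_simp
    have S2 : ∑ i ∈ N₁ ∪ N₂, ∫ ω, (L i (Φ ω) * Φ ω j) * (h i ω * n2 ω) ∂μ = 0 := by
      refine Finset.sum_eq_zero fun i hi => ?_
      rw [eval2 _ hψm i hi, e_hn2 ⟨i, hi⟩, mul_zero]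
    have S3 : ∑ k ∈ N₁ ∪ N₂, ∫ ω, (R k (Φ ω) * Φ ω j) * (n1 ω * h k ω) ∂μ = 0 := by
      refine Finset.sum_eq_zero fun k hk => ?_
      rw [eval3 _ hψm k hk, e_n1h ⟨k, hk⟩, mul_zero]
    have S5 : ∑ k ∈ N₁ ∪ N₂, ∫ ω, (R k (Φ ω) * Φ ω j) * (n3 ω * h k ω) ∂μ = 0 := by
      refine Finset.sum_eq_zero fun k hk => ?_
      rw [eval5 _ hψm k hk, e_n3h ⟨k, hk⟩, mul_zero]
    have S4 : ∫ ω, Φ ω j * (n1 ω * n2 ω) ∂μ = 0 := by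
      rw [eval4 _ hψm, e_n1n2, mul_zero]
    have S6 : ∫ ω, Φ ω j * (n3 ω * n2 ω) ∂μ = 0 := by
      rw [eval6 _ hψm, e_n3n2, mul_zero]
    rw [S1, S2, S3, S4, S5, S6, ← Finset.sum_mul, mul_comm]
    ring
  
  -- rewrite the original integrand in terms of A and B
  have hA' : ∀ ω, A ω = ∑ i ∈ N₁, a i * h i ω
      + ∑ i ∈ N₂, (inner ℝ (v i) (Φ ω) : ℝ) * h i ω := by
    intro ω
    simp only [hAdef]
    rw [Finset.sum_union hdisj]
    congr 1
    · exact Finset.sum_congr rfl fun i hi => by simp only [hLdef, if_pos hi]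
    · exact Finset.sum_congr rfl fun i hi => by simp only [hLdef, if_neg (hnot i hi)]
  have hB' : ∀ ω, B ω = ∑ i ∈ N₁, (inner ℝ (v i) (Φ ω) : ℝ) * h i ω
      + ∑ i ∈ N₂, a i * h i ω := by
    intro ω
    simp only [hBdef]
    rw [Finset.sum_union hdisj]
    congr 1
    · exact Finset.sum_congr rfl fun i hi => by simp only [hRdef, if_pos hi]
    · exact Finset.sum_congr rfl fun i hi => by simp only [hRdef, if_neg (hnot i hi)]
  have hS : ∀ ω, (∑ i ∈ N₁, a i * h i ω + n1 ω) *
          (∑ i ∈ N₁, (inner ℝ (v i) (Φ ω) : ℝ) * h i ω +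
            ∑ j ∈ N₂, a j * h j ω + n2 ω) +
        (∑ j ∈ N₂, (inner ℝ (v j) (Φ ω) : ℝ) * h j ω + n3 ω) *
          (∑ i ∈ N₁, (inner ℝ (v i) (Φ ω) : ℝ) * h i ω +
            ∑ j ∈ N₂, a j * h j ω + n2 ω)
      = (A ω + (n1 ω + n3 ω)) * (B ω + n2 ω) := by
    intro ω
    rw [hA' ω, hB' ω]
    ring
  -- integrability of the scalar factor
  have hintS : Integrable (fun ω => (A ω + (n1 ω + n3 ω)) * (B ω + n2 ω)) μ := by
    have h1 : Measurable (fun _ : EuclideanSpace ℝ (Fin d) => (1:ℝ)) := measurable_const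
    have hbd1 : ∀ᵐ ω ∂μ, |(fun _ : EuclideanSpace ℝ (Fin d) => (1:ℝ)) (Φ ω)| ≤ 1 :=
      Filter.Eventually.of_forall fun ω => by simp
    have I1 : Integrable (fun ω => ∑ i ∈ N₁ ∪ N₂, ∑ k ∈ N₁ ∪ N₂,
        L i (Φ ω) * R k (Φ ω) * 1 * (h i ω * h k ω)) μ :=
      integrable_finset_sum _ fun i hi => integrable_finset_sum _ fun k hk =>
        int_t1 _ 1 h1 hbd1 i hi k hk
    have I2 : Integrable (fun ω => ∑ i ∈ N₁ ∪ N₂,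
        L i (Φ ω) * 1 * (h i ω * n2 ω)) μ :=
      integrable_finset_sum _ fun i hi => int_t2 _ 1 h1 hbd1 i hi
    have I3 : Integrable (fun ω => ∑ k ∈ N₁ ∪ N₂,
        R k (Φ ω) * 1 * (n1 ω * h k ω)) μ :=
      integrable_finset_sum _ fun k hk => int_t3 _ 1 h1 hbd1 k hk
    have I5 : Integrable (fun ω => ∑ k ∈ N₁ ∪ N₂,
        R k (Φ ω) * 1 * (n3 ω * h k ω)) μ :=
      integrable_finset_sum _ fun k hk => int_t5 _ 1 h1 hbd1 k hk
    have I4 : Integrable (fun ω => (1:ℝ) * (n1 ω * n2 ω)) μ := int_t4 _ 1 h1 hbd1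
    have I6 : Integrable (fun ω => (1:ℝ) * (n3 ω * n2 ω)) μ := int_t6 _ 1 h1 hbd1
    have Iall : Integrable (fun ω => ∑ i ∈ N₁ ∪ N₂, ∑ k ∈ N₁ ∪ N₂,
        L i (Φ ω) * R k (Φ ω) * 1 * (h i ω * h k ω)
        + (∑ i ∈ N₁ ∪ N₂, L i (Φ ω) * 1 * (h i ω * n2 ω)
        + (∑ k ∈ N₁ ∪ N₂, R k (Φ ω) * 1 * (n1 ω * h k ω)
        + (∑ k ∈ N₁ ∪ N₂, R k (Φ ω) * 1 * (n3 ω * h k ω)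
        + ((1:ℝ) * (n1 ω * n2 ω) + (1:ℝ) * (n3 ω * n2 ω)))))) μ :=
      I1.add (I2.add (I3.add (I5.add (I4.add I6))))
    exact Iall.congr (Filter.Eventually.of_forall fun ω =>
      ((expand (fun _ => (1:ℝ)) ω).symm.trans (mul_one _)))
  have hintF : Integrable (fun ω => ((A ω + (n1 ω + n3 ω)) * (B ω + n2 ω)) • Φ ω) μ := by
    refine Integrable.mono' (hintS.norm.mul_const b₂)
      (hintS.1.smul hΦmeas.aestronglyMeasurable) ?_
    filter_upwards [hΦbdd] with ω hω
    rw [norm_smul]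
    exact mul_le_mul_of_nonneg_left hω (norm_nonneg _)
  -- conclusion
  simp only [hS]
  refine PiLp.ext fun j => ?_
  have h1 : (∫ ω, ((A ω + (n1 ω + n3 ω)) * (B ω + n2 ω)) • Φ ω ∂μ) j
      = ∫ ω, ((A ω + (n1 ω + n3 ω)) * (B ω + n2 ω)) * Φ ω j ∂μ :=
    ((EuclideanSpace.proj (𝕜 := ℝ) j).integral_comp_comm hintF).symm
  have h3 : (∑ i ∈ N₁ ∪ N₂, v i) j = ∑ i ∈ N₁ ∪ N₂, v i j :=
    map_sum (EuclideanSpace.proj (𝕜 := ℝ) j) v (N₁ ∪ N₂)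
  have h2 : (b₁ • ∑ i ∈ N₁ ∪ N₂, v i) j = b₁ * (∑ i ∈ N₁ ∪ N₂, v i) j := rfl
  rw [h1, key j, h2, h3]
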